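/- For every finite nonempty alphabet A, every finite coloring of W(A) admits an infinite sequence (t_n(x))_{n=0}^∞ of variable words over A such that t_n(x) is a left variable word for every n ≥ 1, and for every n ∈ ℕ, every choice of indices 0 = m_0 < m_1 < ⋯ < m_n, and every choice of letters a_0, a_1, …, a_n ∈ A, the concatenated words t_{m_0}(a_0) t_{m_1}(a_1) ⋯ t_{m_n}(a_n) all receive the same color. -/

import Mathlib

/- Words over an alphabet are `List α`.  The variable symbol `x` is modelled by
`none : Option α`, and variable words are lists over `Option α` containing `none`. -/

namespace HJ

variable {α : Type*}

/-- Substitution of the letter `a` for every occurrence of the variable in a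
variable word, producing a constant word. -/
def substC (s : List (Option α)) (a : α) : List α :=
  s.map (fun b => b.getD a)

/-- Substitution of `b ∈ A ∪ {x}` (a letter `some a` or the variable `none`)
for every occurrence of the variable. -/
def substV (s : List (Option α)) (b : Option α) : List (Option α) :=
  s.map (fun c => Option.elim c b some)

/-- `s` is a variable word over the alphabet `S`: all its letters lie in `S`
and it contains at least one occurrence of the variable. -/
def IsVarWord (S : Set α) (s : List (Option α)) : Prop :=
  (∀ a : α, some a ∈ s → a ∈ S) ∧ none ∈ s

/-- `W(S)`: the set of (constant) words over the alphabet `S`. -/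
def WordsOver (S : Set α) : Set (List α) :=
  { w | ∀ a ∈ w, a ∈ S }

/-- The constant span of the sequence `s` of variable words, with indices
restricted to `I` and the letter substituted at position `l i` taken from the
alphabet `B (l i)`: all concatenations `s_{l_0}(a_0) ⋯ s_{l_n}(a_n)` with
`l_0 < ⋯ < l_n` in `I` and `a_i ∈ B (l_i)`. -/
def constSpan (B : ℕ → Set α) (s : ℕ → List (Option α)) (I : Set ℕ) :
    Set (List α) :=
  { w | ∃ (n : ℕ) (l : Fin (n + 1) → ℕ) (a : Fin (n + 1) → α),
      StrictMono l ∧ (∀ i, l i ∈ I) ∧ (∀ i, a i ∈ B (l i)) ∧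
      w = (List.ofFn fun i => substC (s (l i)) (a i)).flatten }

/-- The variable span of the sequence `s` of variable words, with indices
restricted to `I` and alphabets given by `B`: all concatenations
`s_{l_0}(b_0) ⋯ s_{l_n}(b_n)` with `l_0 < ⋯ < l_n` in `I` and
`b_i ∈ B (l_i) ∪ {x}` which contain at least one occurrence of the variable. -/
def varSpan (B : ℕ → Set α) (s : ℕ → List (Option α)) (I : Set ℕ) :
    Set (List (Option α)) :=
  { w | ∃ (n : ℕ) (l : Fin (n + 1) → ℕ) (b : Fin (n + 1) → Option α),
      StrictMono l ∧ (∀ i, l i ∈ I) ∧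
      (∀ i, ∀ a : α, b i = some a → a ∈ B (l i)) ∧
      none ∈ w ∧
      w = (List.ofFn fun i => substV (s (l i)) (b i)).flatten }

/-- `(t_0, …, t_l)` is a finite extracted subsequence of `s` (with alphabets `B`):
there are `0 = m_0 < m_1 < ⋯` with `t_i` in the variable span of
`(s_n)_{n = m_i}^{m_{i+1} - 1}` (with alphabets `B`) for all `i ≤ l`. -/
def ExtractedFin (B : ℕ → Set α) (s t : ℕ → List (Option α)) (l : ℕ) : Prop :=
  ∃ m : ℕ → ℕ, m 0 = 0 ∧ StrictMono m ∧
    ∀ i ≤ l, t i ∈ varSpan B s (Set.Ico (m i) (m (i + 1)))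

/-- `t` is an infinite extracted subsequence of `s` (with alphabets `B`). -/
def Extracted (B : ℕ → Set α) (s t : ℕ → List (Option α)) : Prop :=
  ∀ l : ℕ, ExtractedFin B s t l

/-- `E` is large in `s` (with alphabets `B`): `E` meets the constant span of
every infinite extracted subsequence of `s`. -/
def IsLarge (B : ℕ → Set α) (E : Set (List α)) (s : ℕ → List (Option α)) : Prop :=
  ∀ w : ℕ → List (Option α), Extracted B s w →
    (E ∩ constSpan B w Set.univ).Nonempty

/-- `E_F = {z ∈ W(S) : w ++ z ∈ E for every w ∈ F}`. -/
def wordQuot (S : Set α) (E F : Set (List α)) : Set (List α) :=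
  { z | z ∈ WordsOver S ∧ ∀ w ∈ F, w ++ z ∈ E }

end HJ

/-! ### An ultrafilter proof of McCutcheon's left-variable Hales–Jewett theorem -/

namespace LVHJ

open Filter

attribute [local instance] Ultrafilter.mul Ultrafilter.semigroup

/-- Words over `α ∪ {x}`, as a semigroup under concatenation. -/
abbrev M (α : Type*) := List (Option α)

variable {α : Type*}

local instance : Semigroup (M α) := { mul := (· ++ ·), mul_assoc := List.append_assoc }

lemma mem_mulU {U V : Ultrafilter (M α)} {s : Set (M α)} :
    s ∈ U * V ↔ {x | {y | x ++ y ∈ s} ∈ V} ∈ U := Iff.rfl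

/-- substitution of `a` for the variable. -/
def sub (a : α) : M α → M α := List.map (fun b => some (b.getD a))

lemma sub_append (a : α) (x y : M α) : sub a (x ++ y) = sub a x ++ sub a y :=
  List.map_append

/-- the lift of `sub a` to ultrafilters. -/
def smap (a : α) (U : Ultrafilter (M α)) : Ultrafilter (M α) := Ultrafilter.map (sub a) U

lemma mem_smap {a : α} {U : Ultrafilter (M α)} {s : Set (M α)} :
    s ∈ smap a U ↔ sub a ⁻¹' s ∈ U := Ultrafilter.mem_map

lemma smap_mul (a : α) (U V : Ultrafilter (M α)) :
    smap a (U * V) = smap a U * smap a V := by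
  apply Ultrafilter.coe_inj.mp
  apply Filter.ext
  intro s
  show s ∈ smap a (U * V) ↔ s ∈ smap a U * smap a V
  rw [mem_smap, mem_mulU, mem_mulU, mem_smap]
  refine Iff.of_eq (congrArg (· ∈ U) ?_)
  ext x
  simp only [Set.mem_preimage, Set.mem_setOf_eq, mem_smap]
  refine Iff.of_eq (congrArg (· ∈ V) ?_)
  ext y
  simp [sub_append]

lemma continuous_smap (a : α) : Continuous (smap a : Ultrafilter (M α) → _) :=
  ultrafilterBasis_is_basis.continuous_iff.2 <| Set.forall_mem_range.mpr fun s ↦ by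
    have h : smap a ⁻¹' {u : Ultrafilter (M α) | s ∈ u} = {u | sub a ⁻¹' s ∈ u} := by
      ext u; exact mem_smap
    rw [h]
    exact ultrafilter_isOpen_basic _

variable (A : Finset α)

/-- Constant words over `A`. -/
def Wset : Set (M α) := {l | ∀ b ∈ l, ∃ a ∈ A, b = some a}

/-- Words over `A ∪ {x}`. -/
def LAset : Set (M α) := {l | ∀ b ∈ l, b = none ∨ ∃ a ∈ A, b = some a}

/-- Left variable words over `A`. -/
def VxSet : Set (M α) := {l | l ∈ LAset A ∧ l.head? = some none}

variable {A}

lemma Wset_sub_LA : Wset A ⊆ LAset A := fun l hl b hb => Or.inr (hl b hb)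

lemma Vx_sub_LA : VxSet A ⊆ LAset A := fun _ hl => hl.1

lemma Wset_append {x y : M α} (hx : x ∈ Wset A) (hy : y ∈ Wset A) : x ++ y ∈ Wset A := by
  intro b hb
  rcases List.mem_append.1 hb with h | h
  exacts [hx b h, hy b h]

lemma LAset_append {x y : M α} (hx : x ∈ LAset A) (hy : y ∈ LAset A) : x ++ y ∈ LAset A := by
  intro b hb
  rcases List.mem_append.1 hb with h | h
  exacts [hx b h, hy b h]

lemma VxSet_append {x y : M α} (hx : x ∈ VxSet A) (hy : y ∈ LAset A) : x ++ y ∈ VxSet A := by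
  refine ⟨LAset_append hx.1 hy, ?_⟩
  rcases x with _ | ⟨b, t⟩
  · simp [VxSet] at hx
  · simpa using hx.2

lemma sub_mem_Wset {a : α} (ha : a ∈ A) {l : M α} (hl : l ∈ LAset A) : sub a l ∈ Wset A := by
  intro b hb
  rcases List.mem_map.1 hb with ⟨b', hb', rfl⟩
  rcases hl b' hb' with rfl | ⟨a', ha', rfl⟩
  · exact ⟨a, ha, rfl⟩
  · exact ⟨a', ha', rfl⟩

lemma sub_fix {a : α} {l : M α} (hl : l ∈ Wset A) : sub a l = l := by
  induction l with
  | nil => rfl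
  | cons b t ih =>
    rcases hl b List.mem_cons_self with ⟨a', _, rfl⟩
    simpa [sub] using ih fun b hb => hl b (List.mem_cons_of_mem _ hb)

lemma mul_mem_of {S S' S'' : Set (M α)} {U V : Ultrafilter (M α)}
    (h : ∀ x ∈ S, ∀ y ∈ S', x ++ y ∈ S'') (hU : S ∈ U) (hV : S' ∈ V) : S'' ∈ U * V := by
  rw [mem_mulU]
  refine Filter.mem_of_superset hU fun x hx => ?_
  exact Filter.mem_of_superset hV fun y hy => h x hx y hy

/-- Existence of an idempotent on `cl W` which is minimal among idempotents there. -/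
theorem exists_min_idem (A : Finset α) :
    ∃ q : Ultrafilter (M α), Wset A ∈ q ∧ q * q = q ∧
      ∀ f : Ultrafilter (M α), Wset A ∈ f → f * f = f → f * q = f → q * f = f → f = q := by
  classical
  set cW : Set (Ultrafilter (M α)) := {U | Wset A ∈ U} with hcW
  have hWnil : ([] : M α) ∈ Wset A := by intro b hb; simp at hb
  have hcWmul : ∀ U ∈ cW, ∀ V ∈ cW, U * V ∈ cW := fun U hU V hV =>
    mul_mem_of (fun x hx y hy => Wset_append hx hy) hU hV
  set 𝒮 : Set (Set (Ultrafilter (M α))) :=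
    {L | L.Nonempty ∧ IsClosed L ∧ L ⊆ cW ∧ ∀ U ∈ cW, ∀ V ∈ L, U * V ∈ L} with h𝒮
  have hcWS : cW ∈ 𝒮 := by
    exact ⟨⟨pure [], by simpa [cW] using hWnil⟩, ultrafilter_isClosed_basic _, subset_rfl, hcWmul⟩
  obtain ⟨L₀, -, hL₀S, hL₀min⟩ : ∃ L₀, L₀ ⊆ cW ∧ L₀ ∈ 𝒮 ∧ ∀ z ∈ 𝒮, z ⊆ L₀ → L₀ ⊆ z := by
    have hch : ∀ c ⊆ 𝒮, IsChain (· ⊆ ·) c → c.Nonempty →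
        ∃ lb ∈ 𝒮, ∀ s ∈ c, lb ⊆ s := by
      intro c hcS hchain hcne
      refine ⟨⋂₀ c, ⟨?_, ?_, ?_, ?_⟩, fun s hs => Set.sInter_subset_of_mem hs⟩
      · haveI : Nonempty c := hcne.to_subtype
        apply IsCompact.nonempty_sInter_of_directed_nonempty_isCompact_isClosed
        · intro s hs t ht
          rcases hchain.total hs ht with h | h
          exacts [⟨s, hs, subset_rfl, h⟩, ⟨t, ht, h, subset_rfl⟩]
        · exact fun U hU => (hcS hU).1
        · exact fun U hU => (hcS hU).2.1.isCompact
        · exact fun U hU => (hcS hU).2.1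
      · exact isClosed_sInter fun s hs => (hcS hs).2.1
      · rcases hcne with ⟨s, hs⟩
        exact (Set.sInter_subset_of_mem hs).trans (hcS hs).2.2.1
      · intro U hU V hV
        exact Set.mem_sInter.2 fun s hs => (hcS hs).2.2.2 U hU V (Set.mem_sInter.1 hV s hs)
    obtain ⟨m, hm1, hm2⟩ := zorn_superset_nonempty 𝒮 hch cW hcWS
    exact ⟨m, hm1, hm2.prop, fun z hz hzm => hm2.2 hz hzm⟩
  obtain ⟨hL₀ne, hL₀closed, hL₀cW, hL₀mul⟩ := hL₀S
  obtain ⟨q, hqL₀, hqq⟩ :=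
    exists_idempotent_in_compact_subsemigroup Ultrafilter.continuous_mul_left L₀ hL₀ne
      hL₀closed.isCompact (fun x hx y hy => hL₀mul x (hL₀cW hx) y hy)
  refine ⟨q, hL₀cW hqL₀, hqq, ?_⟩
  intro f hfW hff hfq hqf
  have hfL₀ : f ∈ L₀ := by
    have := hL₀mul f hfW q hqL₀
    rwa [hfq] at this
  set L₁ : Set (Ultrafilter (M α)) := (fun U => U * f) '' cW with hL₁def
  have hL₁S : L₁ ∈ 𝒮 := by
    refine ⟨⟨pure [] * f, ⟨pure [], by simpa [cW] using hWnil, rfl⟩⟩, ?_, ?_, ?_⟩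
    · exact (((ultrafilter_isClosed_basic _).isCompact).image
        (Ultrafilter.continuous_mul_left f)).isClosed
    · rintro x ⟨U, hU, rfl⟩
      exact hcWmul U hU f hfW
    · rintro V hV x ⟨U, hU, rfl⟩
      exact ⟨V * U, hcWmul V hV U hU, by simp [mul_assoc]⟩
  have hL₁sub : L₁ ⊆ L₀ := by
    rintro x ⟨U, hU, rfl⟩
    exact hL₀mul U hU f hfL₀
  obtain ⟨g, hg, hgf⟩ := hL₀min L₁ hL₁S hL₁sub hqL₀
  have hqfq : q * f = q := by
    rw [← hgf, mul_assoc, hff]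
  rw [← hqf, hqfq]

lemma smap_fixW {a : α} {U : Ultrafilter (M α)} (hU : Wset A ∈ U) : smap a U = U := by
  apply Ultrafilter.coe_inj.mp
  apply Filter.ext
  intro s
  show sub a ⁻¹' s ∈ U ↔ s ∈ U
  constructor
  · intro h
    refine Filter.mem_of_superset (Filter.inter_mem h hU) ?_
    rintro x ⟨hx, hxW⟩
    rwa [← sub_fix (a := a) hxW]
  · intro h
    refine Filter.mem_of_superset (Filter.inter_mem h hU) ?_
    rintro x ⟨hx, hxW⟩
    show sub a x ∈ s
    rwa [sub_fix hxW]

/-- The key algebraic structure: an idempotent `q` concentrated on constant words and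
`p'` concentrated on left-variable words, with the absorption identities. -/
theorem exists_qu (A : Finset α) :
    ∃ q p' : Ultrafilter (M α), Wset A ∈ q ∧ q * q = q ∧ VxSet A ∈ p' ∧
      (∀ a ∈ A, smap a p' * q = smap a p') ∧ (∀ a ∈ A, q * smap a p' = q) := by
  classical
  obtain ⟨q, hqW, hqq, hqmin⟩ := exists_min_idem A
  set ι := {a : α // a ∈ A} with hι
  set P := ι → Ultrafilter (M α) with hP
  set τ : Ultrafilter (M α) → P := fun U i => smap i.1 U with hτ
  have hτmul : ∀ U V, τ (U * V) = τ U * τ V := fun U V => funext fun i => smap_mul i.1 U V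
  have hτcont : Continuous τ := continuous_pi fun i => continuous_smap i.1
  have hPmul_cont : ∀ y : P, Continuous (· * y) := fun y =>
    continuous_pi fun i => (Ultrafilter.continuous_mul_left (y i)).comp (continuous_apply i)
  set cLA : Set (Ultrafilter (M α)) := {U | LAset A ∈ U} with hcLA
  set cVx : Set (Ultrafilter (M α)) := {U | VxSet A ∈ U} with hcVx
  have hLAmul : ∀ U ∈ cLA, ∀ V ∈ cLA, U * V ∈ cLA := fun U hU V hV =>
    mul_mem_of (fun x hx y hy => LAset_append hx hy) hU hV
  have hVxmul : ∀ U ∈ cVx, ∀ V ∈ cLA, U * V ∈ cVx := fun U hU V hV =>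
    mul_mem_of (fun x hx y hy => VxSet_append hx hy) hU hV
  set T : Set P := τ '' cLA with hT
  set RT : Set P := τ '' cVx with hRT
  have hTcpt : IsCompact T := ((ultrafilter_isClosed_basic _).isCompact).image hτcont
  have hRTcpt : IsCompact RT := ((ultrafilter_isClosed_basic _).isCompact).image hτcont
  have hVxLA : cVx ⊆ cLA := fun U hU => Filter.mem_of_superset hU Vx_sub_LA
  have hRTsubT : RT ⊆ T := Set.image_mono hVxLA
  have hTmul : ∀ x ∈ T, ∀ y ∈ T, x * y ∈ T := by
    rintro x ⟨U, hU, rfl⟩ y ⟨V, hV, rfl⟩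
    exact ⟨U * V, hLAmul U hU V hV, hτmul U V⟩
  have hRTmul : ∀ x ∈ RT, ∀ y ∈ T, x * y ∈ RT := by
    rintro x ⟨U, hU, rfl⟩ y ⟨V, hV, rfl⟩
    exact ⟨U * V, hVxmul U hU V hV, hτmul U V⟩
  set Qd : P := fun _ => q with hQd
  have hqLA : q ∈ cLA := Filter.mem_of_superset hqW Wset_sub_LA
  have hτq : τ q = Qd := funext fun i => smap_fixW hqW
  have hQdT : Qd ∈ T := ⟨q, hqLA, hτq⟩
  have hQdQd : Qd * Qd = Qd := funext fun i => hqq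
  have hQmin : ∀ f ∈ T, f * f = f → f * Qd = f → Qd * f = f → f = Qd := by
    rintro f ⟨U, hU, rfl⟩ hff hfQ hQf
    refine funext fun i => ?_
    have h1 : Wset A ∈ smap i.1 U :=
      mem_smap.2 (Filter.mem_of_superset hU fun l hl => sub_mem_Wset i.2 hl)
    exact hqmin (smap i.1 U) h1 (congrFun hff i) (congrFun hfQ i) (congrFun hQf i)
  set Λ : Set P := (fun y => y * Qd) '' T with hΛ
  have hΛcpt : IsCompact Λ := hTcpt.image (hPmul_cont Qd)
  set G : Set P := RT ∩ Λ with hG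
  have hΛT : Λ ⊆ T := by
    rintro x ⟨y, hy, rfl⟩
    exact hTmul y hy Qd hQdT
  have hGne : G.Nonempty := by
    have hmem : ([none] : M α) ∈ VxSet A := by
      constructor
      · intro b hb
        simp only [List.mem_singleton] at hb
        simp [hb]
      · rfl
    have hpn : (pure [none] : Ultrafilter (M α)) ∈ cVx := Ultrafilter.mem_pure.mpr hmem
    refine ⟨τ (pure [none]) * Qd, hRTmul _ ⟨_, hpn, rfl⟩ Qd hQdT, ⟨_, ⟨_, hVxLA hpn, rfl⟩, rfl⟩⟩
  have hGmul : ∀ x ∈ G, ∀ y ∈ G, x * y ∈ G := by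
    rintro x ⟨hx1, hx2⟩ y ⟨hy1, hy2⟩
    refine ⟨hRTmul x hx1 y (hRTsubT hy1), ?_⟩
    rcases hy2 with ⟨z, hz, rfl⟩
    exact ⟨x * z, hTmul x (hΛT hx2) z hz, by simp [mul_assoc]⟩
  obtain ⟨u, huG, huu⟩ :=
    exists_idempotent_in_compact_subsemigroup hPmul_cont G hGne
      (hRTcpt.isClosed.inter hΛcpt.isClosed).isCompact hGmul
  obtain ⟨huRT, huΛ⟩ := huG
  have huQ : u * Qd = u := by
    rcases huΛ with ⟨y, hy, rfl⟩
    rw [mul_assoc, hQdQd]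
  have hQu : Qd * u = Qd := by
    have hfT : Qd * u ∈ T := hTmul Qd hQdT u (hRTsubT huRT)
    have hff : (Qd * u) * (Qd * u) = Qd * u := by
      have h1 : u * (Qd * u) = u * u := by rw [← mul_assoc, huQ]
      rw [mul_assoc, h1, huu]
    have hfQ : (Qd * u) * Qd = Qd * u := by rw [mul_assoc, huQ]
    have hQf : Qd * (Qd * u) = Qd * u := by rw [← mul_assoc, hQdQd]
    exact hQmin _ hfT hff hfQ hQf
  rcases huRT with ⟨p', hp', hτp'⟩
  refine ⟨q, p', hqW, hqq, hp', ?_, ?_⟩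
  · intro a ha
    have h := congrFun huQ ⟨a, ha⟩
    rw [← hτp'] at h
    exact h
  · intro a ha
    have h := congrFun hQu ⟨a, ha⟩
    rw [← hτp'] at h
    exact h


open Filter
attribute [local instance] Ultrafilter.mul Ultrafilter.semigroup
variable {α : Type*} {A : Finset α}
local instance : Semigroup (M α) := { mul := (· ++ ·), mul_assoc := List.append_assoc }

lemma mem_all_list {γ : Type*} {U : Ultrafilter (M α)} (P : List γ) (S : γ → Set (M α))
    (h : ∀ p ∈ P, S p ∈ U) : {x | ∀ p ∈ P, x ∈ S p} ∈ U := by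
  induction P with
  | nil =>
    have : {x : M α | ∀ p ∈ ([] : List γ), x ∈ S p} = Set.univ := by
      ext x; simp
    rw [this]; exact Filter.univ_mem
  | cons hd tl ih =>
    have h1 : S hd ∈ U := h hd List.mem_cons_self
    have h2 := ih fun p hp => h p (List.mem_cons_of_mem _ hp)
    refine Filter.mem_of_superset (Filter.inter_mem h1 h2) ?_
    rintro x ⟨hx1, hx2⟩ p hp
    rcases List.mem_cons.1 hp with rfl | hp
    exacts [hx1, hx2 p hp]

lemma mem_all_finset {γ : Type*} {U : Ultrafilter (M α)} (B : Finset γ) (S : γ → Set (M α))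
    (h : ∀ b ∈ B, S b ∈ U) : {x | ∀ b ∈ B, x ∈ S b} ∈ U := by
  have h1 := mem_all_list B.toList S (fun p hp => h p (Finset.mem_toList.1 hp))
  refine Filter.mem_of_superset h1 fun x hx b hb => hx b (Finset.mem_toList.2 hb)

/-- From `{y | p ++ y ∈ C} ∈ U * V` extract the two-step translate form. -/
lemma mem_shift {U V : Ultrafilter (M α)} {C : Set (M α)} {p : M α}
    (h : {y | p ++ y ∈ C} ∈ U * V) : {z | {y | (p ++ z) ++ y ∈ C} ∈ V} ∈ U := by
  have h2 := mem_mulU.1 h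
  have he : ∀ z : M α, {y | z ++ y ∈ {y | p ++ y ∈ C}} = {y | (p ++ z) ++ y ∈ C} := by
    intro z; ext y; simp [List.append_assoc]
  simpa only [he] using h2

lemma head?_none_mem {l : M α} (h : l.head? = some none) : none ∈ l := by
  cases l with
  | nil => simp at h
  | cons b t => simp_all

/-- The inductive step of the construction. -/
lemma step_ex (q p' : Ultrafilter (M α))
    (hW : Wset A ∈ q) (hVx : VxSet A ∈ p')
    (hR3 : ∀ a ∈ A, smap a p' * q = smap a p') (hR2 : ∀ a ∈ A, q * smap a p' = q)
    (C : Set (M α))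
    (Pl : List (M α)) (hPl : ∀ p ∈ Pl, p ∈ C ∧ ∀ b ∈ A, {y | p ++ y ∈ C} ∈ smap b p') :
    ∃ t', t' ∈ VxSet A ∧ ∀ p ∈ Pl, ∀ a ∈ A,
      (p ++ sub a t' ∈ C ∧ ∀ b ∈ A, {y | (p ++ sub a t') ++ y ∈ C} ∈ smap b p') := by
  -- choose the left-variable part v
  have hv : {v | v ∈ VxSet A ∧
      ∀ p ∈ Pl, ∀ a ∈ A, {y | (p ++ sub a v) ++ y ∈ C} ∈ q} ∈ p' := by
    refine Filter.inter_mem hVx ?_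
    refine Filter.mem_of_superset
      (mem_all_list Pl (fun p => {v | ∀ a ∈ A, {y | (p ++ sub a v) ++ y ∈ C} ∈ q}) ?_)
      (fun v hv p hp a ha => hv p hp a ha)
    intro p hp
    refine Filter.mem_of_superset
      (mem_all_finset A (fun a => {v | {y | (p ++ sub a v) ++ y ∈ C} ∈ q}) ?_)
      (fun v hv a ha => hv a ha)
    intro a ha
    have hD : {y | p ++ y ∈ C} ∈ smap a p' := (hPl p hp).2 a ha
    rw [← hR3 a ha] at hD
    have h2 := mem_shift hD
    rw [mem_smap] at h2
    refine Filter.mem_of_superset h2 ?_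
    intro v hv
    exact hv
  obtain ⟨v, hvVx, hvprop⟩ := Ultrafilter.nonempty_of_mem hv
  -- choose the constant part w
  have hw : {w | w ∈ Wset A ∧ ∀ p ∈ Pl, ∀ a ∈ A,
      (w ∈ {y | (p ++ sub a v) ++ y ∈ C} ∧
        ∀ b ∈ A, {y | w ++ y ∈ {y | (p ++ sub a v) ++ y ∈ C}} ∈ smap b p')} ∈ q := by
    refine Filter.inter_mem hW ?_
    refine Filter.mem_of_superset
      (mem_all_list Pl (fun p => {w | ∀ a ∈ A, _}) ?_) (fun w hw p hp => hw p hp)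
    intro p hp
    refine Filter.mem_of_superset
      (mem_all_finset A (fun a => {w | w ∈ {y | (p ++ sub a v) ++ y ∈ C} ∧
        ∀ b ∈ A, {y | w ++ y ∈ {y | (p ++ sub a v) ++ y ∈ C}} ∈ smap b p'}) ?_)
      (fun w hw a ha => hw a ha)
    intro a ha
    have hZ : {y | (p ++ sub a v) ++ y ∈ C} ∈ q := hvprop p hp a ha
    refine Filter.inter_mem hZ ?_
    refine Filter.mem_of_superset
      (mem_all_finset A (fun b => {w | {y | w ++ y ∈ {y | (p ++ sub a v) ++ y ∈ C}} ∈ smap b p'}) ?_)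
      (fun w hw b hb => hw b hb)
    intro b hb
    have hZ2 : {y | (p ++ sub a v) ++ y ∈ C} ∈ q * smap b p' := by rw [hR2 b hb]; exact hZ
    exact mem_mulU.1 hZ2
  obtain ⟨w, hwW, hwprop⟩ := Ultrafilter.nonempty_of_mem hw
  refine ⟨v ++ w, VxSet_append hvVx (Wset_sub_LA hwW), ?_⟩
  intro p hp a ha
  have hkey : p ++ sub a (v ++ w) = (p ++ sub a v) ++ w := by
    rw [sub_append, sub_fix hwW, List.append_assoc]
  obtain ⟨h1, h2⟩ := hwprop p hp a ha
  constructor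
  · rw [hkey]; exact h1
  · intro b hb
    have h3 := h2 b hb
    have he : {y | (p ++ sub a (v ++ w)) ++ y ∈ C}
        = {y | w ++ y ∈ {y | (p ++ sub a v) ++ y ∈ C}} := by
      ext y
      simp only [Set.mem_setOf_eq, hkey, List.append_assoc]
    rw [he]
    exact h3

/-- The base step of the construction. -/
lemma base_ex (q p' : Ultrafilter (M α))
    (hW : Wset A ∈ q) (hVx : VxSet A ∈ p')
    (hR3 : ∀ a ∈ A, smap a p' * q = smap a p') (hR2 : ∀ a ∈ A, q * smap a p' = q)
    (C : Set (M α)) (hCq : C ∈ q) :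
    ∃ t₀, t₀ ∈ LAset A ∧ none ∈ t₀ ∧ ∀ a ∈ A,
      (sub a t₀ ∈ C ∧ ∀ b ∈ A, {y | sub a t₀ ++ y ∈ C} ∈ smap b p') := by
  -- choose w₋
  have hwm : {w | w ∈ Wset A ∧ ∀ a ∈ A, {y | w ++ y ∈ C} ∈ smap a p'} ∈ q := by
    refine Filter.inter_mem hW ?_
    refine Filter.mem_of_superset
      (mem_all_finset A (fun a => {w | {y | w ++ y ∈ C} ∈ smap a p'}) ?_)
      (fun w hw a ha => hw a ha)
    intro a ha
    have h1 : C ∈ q * smap a p' := by rw [hR2 a ha]; exact hCq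
    exact mem_mulU.1 h1
  obtain ⟨wm, hwmW, hwmprop⟩ := Ultrafilter.nonempty_of_mem hwm
  -- choose v
  have hv : {v | v ∈ VxSet A ∧ ∀ a ∈ A, {y | (wm ++ sub a v) ++ y ∈ C} ∈ q} ∈ p' := by
    refine Filter.inter_mem hVx ?_
    refine Filter.mem_of_superset
      (mem_all_finset A (fun a => {v | {y | (wm ++ sub a v) ++ y ∈ C} ∈ q}) ?_)
      (fun v hv a ha => hv a ha)
    intro a ha
    have hD : {y | wm ++ y ∈ C} ∈ smap a p' := hwmprop a ha
    rw [← hR3 a ha] at hD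
    have h2 := mem_shift hD
    rw [mem_smap] at h2
    exact Filter.mem_of_superset h2 fun v hv => hv
  obtain ⟨v, hvVx, hvprop⟩ := Ultrafilter.nonempty_of_mem hv
  -- choose w₀
  have hw : {w | w ∈ Wset A ∧ ∀ a ∈ A,
      (w ∈ {y | (wm ++ sub a v) ++ y ∈ C} ∧
        ∀ b ∈ A, {y | w ++ y ∈ {y | (wm ++ sub a v) ++ y ∈ C}} ∈ smap b p')} ∈ q := by
    refine Filter.inter_mem hW ?_
    refine Filter.mem_of_superset
      (mem_all_finset A (fun a => {w | w ∈ {y | (wm ++ sub a v) ++ y ∈ C} ∧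
        ∀ b ∈ A, {y | w ++ y ∈ {y | (wm ++ sub a v) ++ y ∈ C}} ∈ smap b p'}) ?_)
      (fun w hw a ha => hw a ha)
    intro a ha
    have hZ : {y | (wm ++ sub a v) ++ y ∈ C} ∈ q := hvprop a ha
    refine Filter.inter_mem hZ ?_
    refine Filter.mem_of_superset
      (mem_all_finset A
        (fun b => {w | {y | w ++ y ∈ {y | (wm ++ sub a v) ++ y ∈ C}} ∈ smap b p'}) ?_)
      (fun w hw b hb => hw b hb)
    intro b hb
    have hZ2 : {y | (wm ++ sub a v) ++ y ∈ C} ∈ q * smap b p' := by rw [hR2 b hb]; exact hZ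
    exact mem_mulU.1 hZ2
  obtain ⟨w0, hw0W, hw0prop⟩ := Ultrafilter.nonempty_of_mem hw
  refine ⟨wm ++ (v ++ w0), LAset_append (Wset_sub_LA hwmW)
    (LAset_append (Vx_sub_LA hvVx) (Wset_sub_LA hw0W)), ?_, ?_⟩
  · have : none ∈ v := head?_none_mem hvVx.2
    simp [this]
  intro a ha
  have hkey : sub a (wm ++ (v ++ w0)) = (wm ++ sub a v) ++ w0 := by
    rw [sub_append, sub_append, sub_fix hwmW, sub_fix hw0W, List.append_assoc]
  obtain ⟨h1, h2⟩ := hw0prop a ha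
  constructor
  · rw [hkey]; exact h1
  · intro b hb
    have h3 := h2 b hb
    have he : {y | sub a (wm ++ (v ++ w0)) ++ y ∈ C}
        = {y | w0 ++ y ∈ {y | (wm ++ sub a v) ++ y ∈ C}} := by
      ext y
      simp only [Set.mem_setOf_eq, hkey, List.append_assoc]
    rw [he]
    exact h3


section Chunk6
open Filter
variable {α : Type*} {A : Finset α}

/-- Anchored products of substitution instances of a list of variable words. -/
def Anch (A : Finset α) (ts : List (M α)) (p : M α) : Prop :=
  ∃ (k : ℕ) (m : Fin (k + 1) → ℕ) (a : Fin (k + 1) → α),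
    StrictMono m ∧ m 0 = 0 ∧ (∀ j, m j < ts.length) ∧ (∀ j, a j ∈ A) ∧
    p = (List.ofFn fun j => sub (a j) (ts.getD (m j) [])).flatten

lemma anch_singleton {t₀ p : M α} (h : Anch A [t₀] p) : ∃ a ∈ A, p = sub a t₀ := by
  obtain ⟨k, m, a, hmono, hm0, hlt, ha, rfl⟩ := h
  have hk : k = 0 := by
    by_contra hk
    have h1 : (0 : Fin (k+1)) < ⟨1, by omega⟩ := by
      simp [Fin.lt_def]
    have h2 := hmono h1
    have h3 := hlt ⟨1, by omega⟩
    simp only [List.length_singleton] at h3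
    omega
  subst hk
  refine ⟨a 0, ha 0, ?_⟩
  have hm : m 0 = 0 := hm0
  simp [List.ofFn_succ, hm]

lemma anch_extend {ts : List (M α)} (hne : ts ≠ []) {t' p : M α}
    (h : Anch A (ts ++ [t']) p) :
    Anch A ts p ∨ ∃ p₀, Anch A ts p₀ ∧ ∃ a ∈ A, p = p₀ ++ sub a t' := by
  obtain ⟨k, m, a, hmono, hm0, hlt, ha, rfl⟩ := h
  simp only [List.length_append, List.length_singleton] at hlt
  by_cases hc : ∀ j, m j < ts.length
  · left
    refine ⟨k, m, a, hmono, hm0, hc, ha, ?_⟩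
    have he : (fun j => sub (a j) ((ts ++ [t']).getD (m j) []))
        = (fun j => sub (a j) (ts.getD (m j) [])) := by
      funext j
      rw [List.getD_append _ _ _ _ (hc j)]
    rw [he]
  · right
    push_neg at hc
    obtain ⟨j₀, hj₀⟩ := hc
    have hlast : m (Fin.last k) = ts.length := by
      have h1 : m j₀ ≤ m (Fin.last k) := hmono.monotone (Fin.le_last j₀)
      have h2 := hlt (Fin.last k)
      omega
    cases k with
    | zero =>
      exfalso
      have h4 : m 0 = ts.length := hlast
      rw [hm0] at h4
      exact hne (List.length_eq_zero_iff.1 h4.symm)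
    | succ k' =>
      set m' : Fin (k' + 1) → ℕ := fun j => m j.castSucc with hm'
      set a' : Fin (k' + 1) → α := fun j => a j.castSucc with ha'
      have hm'lt : ∀ j, m' j < ts.length := by
        intro j
        have h5 : m j.castSucc < m (Fin.last (k' + 1)) := hmono (Fin.castSucc_lt_last j)
        rw [hlast] at h5
        exact h5
      have hm'mono : StrictMono m' := fun i j hij =>
        hmono (Fin.castSucc_lt_castSucc_iff.2 hij)
      have h6 : (ts ++ [t']).getD (m (Fin.last (k' + 1))) [] = t' := by
        rw [hlast, List.getD_append_right _ _ _ _ le_rfl]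
        simp
      have hofn : (List.ofFn fun j => sub (a j) ((ts ++ [t']).getD (m j) []))
          = (List.ofFn fun j => sub (a' j) (ts.getD (m' j) []))
            ++ [sub (a (Fin.last (k' + 1))) t'] := by
        rw [List.ofFn_succ', List.concat_eq_append]
        congr 1
        · exact congrArg List.ofFn (funext fun j => by
            rw [List.getD_append _ _ _ _ (hm'lt j)])
        · rw [h6]
      refine ⟨(List.ofFn fun j => sub (a' j) (ts.getD (m' j) [])).flatten,
        ⟨k', m', a', hm'mono, hm0, hm'lt, fun j => ha _, rfl⟩, a (Fin.last (k' + 1)),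
        ha _, ?_⟩
      rw [hofn, List.flatten_append]
      simp

lemma reduceOption_sub (a : α) (s : M α) : (sub a s).reduceOption = HJ.substC s a := by
  induction s with
  | nil => rfl
  | cons b tl ih =>
    simp only [sub, HJ.substC, List.map_cons, List.reduceOption_cons_of_some] at *
    rw [ih]

lemma reduceOption_flatten (L : List (M α)) :
    L.flatten.reduceOption = (L.map List.reduceOption).flatten := by
  induction L with
  | nil => rfl
  | cons hd tl ih => simp [List.reduceOption_append, ih]

end Chunk6


section Main
open Filter
variable {α : Type*}

theorem main (A : Finset α) (r : ℕ) (c : List α → Fin r) :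
    ∃ t : ℕ → M α,
      (∀ n, t n ∈ LAset A ∧ none ∈ t n) ∧
      (∀ n, 1 ≤ n → (t n).head? = some none) ∧
      ∃ col : Fin r,
        ∀ (n : ℕ) (m : Fin (n + 1) → ℕ) (a : Fin (n + 1) → α),
          StrictMono m → m 0 = 0 → (∀ j, a j ∈ A) →
          c ((List.ofFn fun j => sub (a j) (t (m j))).flatten).reduceOption = col := by
  classical
  obtain ⟨q, p', hW, hqq, hVx, hR3, hR2⟩ := exists_qu A
  set g : M α → Fin r := fun l => c l.reduceOption with hg
  obtain ⟨col, hcol⟩ := Ultrafilter.eq_pure_of_finite (Ultrafilter.map g q)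
  set C : Set (M α) := {l | g l = col} with hCdef
  have hCq : C ∈ q := by
    have h1 : {col} ∈ Ultrafilter.map g q := by rw [hcol]; exact Ultrafilter.mem_pure.2 rfl
    have h2 : g ⁻¹' {col} ∈ q := Ultrafilter.mem_map.1 h1
    refine Filter.mem_of_superset h2 ?_
    intro l hl
    exact hl
  obtain ⟨t₀, ht₀LA, ht₀none, ht₀prop⟩ := base_ex q p' hW hVx hR3 hR2 C hCq
  set Inv : List (M α) × List (M α) → Prop := fun s =>
    s.1 ≠ [] ∧ (∀ w ∈ s.1, w ∈ LAset A ∧ none ∈ w) ∧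
      (∀ j, 1 ≤ j → j < s.1.length → (s.1.getD j []).head? = some none) ∧
      (∀ p, Anch A s.1 p → p ∈ s.2) ∧
      (∀ p ∈ s.2, p ∈ C ∧ ∀ b ∈ A, {y | p ++ y ∈ C} ∈ smap b p') with hInv
  have hs₀ : Inv ([t₀], A.toList.map (fun a => sub a t₀)) := by
    refine ⟨by simp, ?_, ?_, ?_, ?_⟩
    · intro w hw
      rw [List.mem_singleton] at hw
      subst hw; exact ⟨ht₀LA, ht₀none⟩
    · intro j hj hjlen
      simp only [List.length_singleton] at hjlen
      omega
    · intro p hp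
      obtain ⟨a, ha, rfl⟩ := anch_singleton hp
      exact List.mem_map.2 ⟨a, Finset.mem_toList.2 ha, rfl⟩
    · intro p hp
      obtain ⟨a, ha, rfl⟩ := List.mem_map.1 hp
      exact ht₀prop a (Finset.mem_toList.1 ha)
  have hnext : ∀ s : {s : List (M α) × List (M α) // Inv s},
      ∃ s' : {s : List (M α) × List (M α) // Inv s},
        ∃ t', s'.1.1 = s.1.1 ++ [t'] ∧ t' ∈ VxSet A := by
    rintro ⟨⟨ts, Pl⟩, hts_ne, htsw, htshead, hanch, hPl⟩
    obtain ⟨t', ht'Vx, ht'prop⟩ := step_ex q p' hW hVx hR3 hR2 C Pl hPl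
    refine ⟨⟨(ts ++ [t'], Pl ++ Pl.flatMap (fun p => A.toList.map (fun a => p ++ sub a t'))),
      ?_, ?_, ?_, ?_, ?_⟩, t', rfl, ht'Vx⟩
    · simp
    · intro w hw
      rcases List.mem_append.1 hw with h | h
      · exact htsw w h
      · rw [List.mem_singleton] at h
        subst h
        exact ⟨Vx_sub_LA ht'Vx, head?_none_mem ht'Vx.2⟩
    · intro j hj hjlen
      rw [List.length_append, List.length_singleton] at hjlen
      rcases Nat.lt_or_ge j ts.length with h | h
      · rw [List.getD_append _ _ _ _ h]
        exact htshead j hj h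
      · have hj' : j = ts.length := by omega
        subst hj'
        rw [List.getD_append_right _ _ _ _ le_rfl]
        simpa using ht'Vx.2
    · intro p hp
      rcases anch_extend hts_ne hp with h | ⟨p₀, hp₀, a, ha, rfl⟩
      · exact List.mem_append.2 (Or.inl (hanch p h))
      · refine List.mem_append.2 (Or.inr ?_)
        refine List.mem_flatMap.2 ⟨p₀, hanch p₀ hp₀, ?_⟩
        exact List.mem_map.2 ⟨a, Finset.mem_toList.2 ha, rfl⟩
    · intro p hp
      rcases List.mem_append.1 hp with h | h
      · exact hPl p h
      · obtain ⟨p₀, hp₀, hmem⟩ := List.mem_flatMap.1 h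
        obtain ⟨a, ha, rfl⟩ := List.mem_map.1 hmem
        exact ht'prop p₀ hp₀ a (Finset.mem_toList.1 ha)
  choose nextF tF hF1 hF2 using hnext
  set F : ℕ → {s : List (M α) × List (M α) // Inv s} :=
    fun n => Nat.rec ⟨([t₀], A.toList.map (fun a => sub a t₀)), hs₀⟩ (fun _ s => nextF s) n
    with hF
  have hFsucc : ∀ n, (F (n + 1)).1.1 = (F n).1.1 ++ [tF (F n)] := fun n => hF1 (F n)
  have hlen : ∀ n, (F n).1.1.length = n + 1 := by
    intro n; induction n with
    | zero => rfl
    | succ n ih => rw [hFsucc n]; simp [ih]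
  set t : ℕ → M α := fun n => (F n).1.1.getD n [] with ht
  have hstable : ∀ n j, j ≤ n → (F n).1.1.getD j [] = t j := by
    intro n; induction n with
    | zero =>
      intro j hj
      have hj0 : j = 0 := by omega
      subst hj0; rfl
    | succ n ih =>
      intro j hj
      rcases Nat.lt_or_ge j (n + 1) with h | h
      · rw [hFsucc n, List.getD_append _ _ _ _ (by rw [hlen]; exact h)]
        exact ih j (by omega)
      · have hj' : j = n + 1 := by omega
        subst hj'; rfl
  refine ⟨t, ?_, ?_, col, ?_⟩
  · intro n
    obtain ⟨-, h1, -, -, -⟩ := (F n).2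
    apply h1
    have h2 : n < (F n).1.1.length := by rw [hlen]; omega
    rw [ht]
    simp only []
    rw [List.getD_eq_getElem _ _ h2]
    exact List.getElem_mem _
  · intro n hn
    obtain ⟨-, -, h1, -, -⟩ := (F n).2
    exact h1 n hn (by rw [hlen]; omega)
  · intro n m a hmono hm0 ha
    set N := m (Fin.last n) with hN
    have hAnch : Anch A (F N).1.1 ((List.ofFn fun j => sub (a j) (t (m j))).flatten) := by
      refine ⟨n, m, a, hmono, hm0, ?_, ha, ?_⟩
      · intro j
        have hle : m j ≤ N := hmono.monotone (Fin.le_last j)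
        rw [hlen]; omega
      · have he : (fun j => sub (a j) (t (m j)))
            = (fun j => sub (a j) ((F N).1.1.getD (m j) [])) := by
          funext j
          rw [hstable N (m j) (hmono.monotone (Fin.le_last j))]
        rw [he]
    obtain ⟨-, -, -, h4, h5⟩ := (F N).2
    exact (h5 _ (h4 _ hAnch)).1
end Main

end LVHJ

open HJ in
/-- McCutcheon's left-variable version: all the variable words after the first
may be taken to be left variable words, and the indices start with `m₀ = 0`. -/
theorem stmt18 {α : Type*} (A : Finset α) (hA : A.Nonempty)
    (r : ℕ) (hr : 1 ≤ r) (c : List α → Fin r) :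
    ∃ t : ℕ → List (Option α),
      (∀ n, IsVarWord (A : Set α) (t n)) ∧
      (∀ n : ℕ, 1 ≤ n → (t n).head? = some none) ∧
      ∃ col : Fin r,
        ∀ (n : ℕ) (m : Fin (n + 1) → ℕ) (a : Fin (n + 1) → α),
          StrictMono m → m 0 = 0 → (∀ j, a j ∈ A) →
          c ((List.ofFn fun j => substC (t (m j)) (a j)).flatten) = col := by
  classical
  obtain ⟨t, hwords, hheads, col, hcol⟩ := LVHJ.main A r c
  refine ⟨t, ?_, hheads, col, ?_⟩
  · intro n
    obtain ⟨hLA, hnone⟩ := hwords n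
    refine ⟨?_, hnone⟩
    intro a' ha'
    rcases hLA (some a') ha' with h | ⟨a'', ha'', he⟩
    · simp at h
    · rw [Option.some_inj] at he
      subst he
      exact ha''
  · intro n m a hm hm0 ha
    have h := hcol n m a hm hm0 ha
    rw [← h]
    congr 1
    rw [LVHJ.reduceOption_flatten, List.map_ofFn]
    apply congrArg List.flatten
    apply congrArg List.ofFn
    funext j
    exact (LVHJ.reduceOption_sub (a j) (t (m j))).symm
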